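/- Let C_* be the two-term complex 0 → D_{i+1} →^∂ D_i → 0 (in degrees i+1 and i) where ∂ is an isomorphism of projective kH-modules. Then for n > i, the resolution module M(C_*, n) is isomorphic as a kG-module to D_i ⊗_k k[Z]/(Z^p), and in particular is a projective kG-module. -/

import Mathlib

open MonoidAlgebra

set_option maxHeartbeats 1000000

theorem aux_comm {k : Type} [Field k] {p : ℕ} {H : Type} [Group H]
    (c : MonoidAlgebra k H) :
    Commute (MonoidAlgebra.single (1 : Multiplicative (ZMod p)) c)
      (MonoidAlgebra.single (Multiplicative.ofAdd (1 : ZMod p)) (1 : MonoidAlgebra k H) - 1) := by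
  refine Commute.sub_right ?_ (Commute.one_right _)
  show _ * _ = _ * _
  simp [MonoidAlgebra.single_mul_single]

theorem aux_key {k : Type} [Field k] {p : ℕ} {H : Type} [Group H]
    (N : Type) [AddCommGroup N]
    [Module (MonoidAlgebra (MonoidAlgebra k H) (Multiplicative (ZMod p))) N]
    [Module (MonoidAlgebra k H) N]
    [IsScalarTower (MonoidAlgebra k H)
      (MonoidAlgebra (MonoidAlgebra k H) (Multiplicative (ZMod p))) N]
    (r : MonoidAlgebra k H) (x : N) :
    (MonoidAlgebra.single (1 : Multiplicative (ZMod p)) r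
      : MonoidAlgebra (MonoidAlgebra k H) (Multiplicative (ZMod p))) • x = r • x := by
  have h1 : (MonoidAlgebra.single (1 : Multiplicative (ZMod p)) r
      : MonoidAlgebra (MonoidAlgebra k H) (Multiplicative (ZMod p)))
      = r • (1 : MonoidAlgebra (MonoidAlgebra k H) (Multiplicative (ZMod p))) := by
    rw [MonoidAlgebra.one_def, MonoidAlgebra.smul_single', mul_one]
  rw [h1, smul_assoc, one_smul]

theorem aux_bridge {k : Type} [Field k] {p : ℕ} (hp : p.Prime) {H : Type} [Group H]
    {M N : Type} [AddCommGroup M] [AddCommGroup N]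
    [Module (MonoidAlgebra (MonoidAlgebra k H) (Multiplicative (ZMod p))) M]
    [Module (MonoidAlgebra k H) M]
    [IsScalarTower (MonoidAlgebra k H)
      (MonoidAlgebra (MonoidAlgebra k H) (Multiplicative (ZMod p))) M]
    [Module (MonoidAlgebra (MonoidAlgebra k H) (Multiplicative (ZMod p))) N]
    [Module (MonoidAlgebra k H) N]
    [IsScalarTower (MonoidAlgebra k H)
      (MonoidAlgebra (MonoidAlgebra k H) (Multiplicative (ZMod p))) N]
    (L : M →ₗ[MonoidAlgebra k H] N)
    (hL : ∀ x : M,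
      L ((MonoidAlgebra.single (Multiplicative.ofAdd (1 : ZMod p)) (1 : MonoidAlgebra k H)
        : MonoidAlgebra (MonoidAlgebra k H) (Multiplicative (ZMod p))) • x)
      = (MonoidAlgebra.single (Multiplicative.ofAdd (1 : ZMod p)) (1 : MonoidAlgebra k H)
        : MonoidAlgebra (MonoidAlgebra k H) (Multiplicative (ZMod p))) • L x)
    (z : MonoidAlgebra (MonoidAlgebra k H) (Multiplicative (ZMod p))) (x : M) :
    L (z • x) = z • L x := by
  haveI : NeZero p := ⟨hp.pos.ne'⟩
  set σ : MonoidAlgebra (MonoidAlgebra k H) (Multiplicative (ZMod p)) :=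
    MonoidAlgebra.single (Multiplicative.ofAdd (1 : ZMod p)) (1 : MonoidAlgebra k H) with hσ
  have hpow : ∀ (j : ℕ) (y : M), L ((σ ^ j) • y) = (σ ^ j) • L y := by
    intro j
    induction j with
    | zero => intro y; simp
    | succ j ih =>
      intro y
      rw [pow_succ', mul_smul, mul_smul, hL, ih]
  induction z using MonoidAlgebra.induction_on with
  | of g =>
    have hg : MonoidAlgebra.of (MonoidAlgebra k H) (Multiplicative (ZMod p)) g
        = σ ^ (g.toAdd.val) := by
      rw [hσ, MonoidAlgebra.single_pow, one_pow, ← ofAdd_nsmul, nsmul_eq_mul, mul_one,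
        ZMod.natCast_val, ZMod.cast_id, MonoidAlgebra.of_apply, ofAdd_toAdd]
    rw [hg]
    exact hpow _ x
  | add f g hf hg =>
    rw [add_smul, add_smul, map_add, hf, hg]
  | smul r f hf =>
    have h1 : r • f = (MonoidAlgebra.single (1 : Multiplicative (ZMod p)) r) * f := by
      ext a
      rw [MonoidAlgebra.single_one_mul_apply, MonoidAlgebra.coeff_smul_apply, smul_eq_mul]
    rw [h1, mul_smul, mul_smul, aux_key, aux_key, map_smul, hf]

theorem aux_main (k : Type) [Field k] (p : ℕ) (hp : p.Prime) [CharP k p]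
    (H : Type) [Group H]
    (P : Type) [AddCommGroup P] [Module (MonoidAlgebra k H) P]
    (hproj : Module.Projective (MonoidAlgebra k H) P)
    (M : Type) [AddCommGroup M]
    [Module (MonoidAlgebra (MonoidAlgebra k H) (Multiplicative (ZMod p))) M]
    [Module (MonoidAlgebra k H) M]
    [IsScalarTower (MonoidAlgebra k H)
      (MonoidAlgebra (MonoidAlgebra k H) (Multiplicative (ZMod p))) M]
    (Z : MonoidAlgebra (MonoidAlgebra k H) (Multiplicative (ZMod p)))
    (hZ : Z = MonoidAlgebra.single (Multiplicative.ofAdd (1 : ZMod p))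
      (1 : MonoidAlgebra k H) - 1)
    (φ : (Fin p → P) →ₗ[MonoidAlgebra k H] M) (hbij : Function.Bijective φ)
    (hsh : ∀ f : Fin p → P, Z • φ f
      = φ (fun r => if (r : ℕ) = 0 then 0
          else f ⟨(r : ℕ) - 1, lt_of_le_of_lt (Nat.sub_le _ _) r.2⟩)) :
    Module.Projective (MonoidAlgebra (MonoidAlgebra k H) (Multiplicative (ZMod p))) M ∧
    ∃ e : M ≃ₗ[MonoidAlgebra k H] (Fin p → P),
      (∀ m : M, e (Z • m) ⟨0, hp.pos⟩ = 0) ∧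
      (∀ (m : M) (r : Fin p) (hr : 0 < (r : ℕ)),
        e (Z • m) r = e m ⟨(r : ℕ) - 1, lt_of_le_of_lt (Nat.sub_le _ _) r.2⟩) := by
  obtain ⟨q, rfl⟩ : ∃ q, p = q + 2 := ⟨p - 2, by have := hp.two_le; omega⟩
  haveI : NeZero (q + 2) := ⟨by omega⟩
  haveI : Fact (Nat.Prime (q + 2)) := ⟨hp⟩
  haveI hcR : CharP (MonoidAlgebra k H) (q + 2) :=
    charP_of_injective_ringHom (f := MonoidAlgebra.singleOneRingHom)
      (fun a b hab => by
        have := congrArg (fun x : MonoidAlgebra k H => x.coeff 1) hab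
        simpa [MonoidAlgebra.singleOneRingHom] using this) _
  haveI hcS : CharP (MonoidAlgebra (MonoidAlgebra k H) (Multiplicative (ZMod (q + 2)))) (q + 2) :=
    charP_of_injective_ringHom (f := MonoidAlgebra.singleOneRingHom)
      (fun a b hab => by
        have := congrArg
          (fun x : MonoidAlgebra (MonoidAlgebra k H) (Multiplicative (ZMod (q + 2))) => x.coeff 1) hab
        simpa [MonoidAlgebra.singleOneRingHom] using this) _
  have hZp : Z ^ (q + 2) = 0 := by
    rw [hZ, sub_pow_char_of_commute (q + 2) (Commute.one_right _), one_pow,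
      MonoidAlgebra.single_pow, one_pow]
    have h1 : (Multiplicative.ofAdd (1 : ZMod (q + 2))) ^ (q + 2) = 1 := by
      rw [← ofAdd_nsmul, nsmul_eq_mul, mul_one, ZMod.natCast_self, ofAdd_zero]
    rw [h1, ← MonoidAlgebra.one_def, sub_self]
  set e' : (Fin (q + 2) → P) ≃ₗ[MonoidAlgebra k H] M :=
    LinearEquiv.ofBijective φ hbij with he'
  have hsymmφ : ∀ f, e'.symm (φ f) = f := fun f => e'.symm_apply_apply f
  have happ : ∀ m, φ (e'.symm m) = m := fun m => e'.apply_symm_apply m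
  have hesZ : ∀ m : M, e'.symm (Z • m)
      = fun r : Fin (q + 2) => if (r : ℕ) = 0 then 0
          else e'.symm m ⟨(r : ℕ) - 1, lt_of_le_of_lt (Nat.sub_le _ _) r.2⟩ := by
    intro m
    obtain ⟨f, rfl⟩ := hbij.2 m
    rw [hsh f, hsymmφ, hsymmφ]
  constructor
  · -- Projectivity
    obtain ⟨s0, hs0⟩ := (Module.projective_def).mp hproj
    set δ : (P →₀ MonoidAlgebra k H) →ₗ[MonoidAlgebra k H]
        (P →₀ MonoidAlgebra (MonoidAlgebra k H) (Multiplicative (ZMod (q + 2)))) :=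
      Finsupp.linearCombination (MonoidAlgebra k H)
        (fun x : P => Finsupp.single x
          (1 : MonoidAlgebra (MonoidAlgebra k H) (Multiplicative (ZMod (q + 2))))) with hδ
    have hcommZ : ∀ c : MonoidAlgebra k H,
        Commute (MonoidAlgebra.single (1 : Multiplicative (ZMod (q + 2))) c) Z := by
      intro c; rw [hZ]; exact aux_comm c
    set μ : ℕ → ((P →₀ MonoidAlgebra (MonoidAlgebra k H) (Multiplicative (ZMod (q + 2))))
        →ₗ[MonoidAlgebra k H]
        (P →₀ MonoidAlgebra (MonoidAlgebra k H) (Multiplicative (ZMod (q + 2))))) := fun j =>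
      { toFun := fun v => Z ^ j • v
        map_add' := fun a b => smul_add _ a b
        map_smul' := fun c v => by
          simp only [RingHom.id_apply]
          rw [← aux_key (p := q + 2) _ c v, ← aux_key (p := q + 2) _ c (Z ^ j • v), smul_smul, smul_smul,
            ((hcommZ c).pow_right j).eq] } with hμ
    set α₀ : M →ₗ[MonoidAlgebra k H]
        (P →₀ MonoidAlgebra (MonoidAlgebra k H) (Multiplicative (ZMod (q + 2)))) :=
      ∑ r : Fin (q + 2), (μ (r : ℕ)).comp (δ.comp (s0.comp
        ((LinearMap.proj r).comp (e'.symm : M →ₗ[MonoidAlgebra k H] (Fin (q + 2) → P)))))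
      with hα₀def
    have hα₀ : ∀ m, α₀ m = ∑ r : Fin (q + 2), Z ^ (r : ℕ) • δ (s0 (e'.symm m r)) := by
      intro m
      rw [hα₀def]
      rw [LinearMap.sum_apply]
      rfl
    have hα₀Z : ∀ m, α₀ (Z • m) = Z • α₀ m := by
      intro m
      rw [hα₀ (Z • m), hα₀ m]
      have hL : ∑ r : Fin (q + 2), Z ^ (r : ℕ) • δ (s0 (e'.symm (Z • m) r))
          = ∑ r : Fin (q + 1), Z ^ ((r : ℕ) + 1) • δ (s0 (e'.symm m ⟨(r : ℕ), by omega⟩)) := by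
        rw [Fin.sum_univ_succ]
        have h0 : e'.symm (Z • m) (0 : Fin (q + 2)) = 0 := by rw [hesZ m]; simp
        rw [h0, map_zero, map_zero, smul_zero, zero_add]
        refine Finset.sum_congr rfl fun r _ => ?_
        have hsucc : e'.symm (Z • m) (Fin.succ r) = e'.symm m ⟨(r : ℕ), by omega⟩ := by
          rw [hesZ m]
          simp only [Fin.val_succ]
          rw [if_neg (Nat.succ_ne_zero _)]
          exact congrArg (e'.symm m) (Fin.ext (by simp))
        rw [hsucc, Fin.val_succ]
      have hR : Z • ∑ r : Fin (q + 2), Z ^ (r : ℕ) • δ (s0 (e'.symm m r))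
          = ∑ r : Fin (q + 1), Z ^ ((r : ℕ) + 1) • δ (s0 (e'.symm m ⟨(r : ℕ), by omega⟩)) := by
        rw [Finset.smul_sum]
        have hterm : ∀ r : Fin (q + 2), Z • (Z ^ (r : ℕ) • δ (s0 (e'.symm m r)))
            = Z ^ ((r : ℕ) + 1) • δ (s0 (e'.symm m r)) := by
          intro r; rw [smul_smul, ← pow_succ']
        rw [Finset.sum_congr rfl fun r _ => hterm r]
        rw [Fin.sum_univ_castSucc]
        have hlast : Z ^ ((Fin.last (q + 1) : ℕ) + 1) = (0 : MonoidAlgebra (MonoidAlgebra k H)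
            (Multiplicative (ZMod (q + 2)))) := by
          rw [Fin.val_last]; exact hZp
        rw [hlast, zero_smul, add_zero]
        refine Finset.sum_congr rfl fun r _ => ?_
        have hc : Fin.castSucc r = (⟨(r : ℕ), by omega⟩ : Fin (q + 2)) := Fin.ext (by simp)
        rw [hc]
      rw [hL, hR]
    have hα₀σ : ∀ x, α₀ ((MonoidAlgebra.single (Multiplicative.ofAdd (1 : ZMod (q + 2)))
        (1 : MonoidAlgebra k H)) • x)
        = (MonoidAlgebra.single (Multiplicative.ofAdd (1 : ZMod (q + 2)))
        (1 : MonoidAlgebra k H)) • α₀ x := by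
      have hσZ : (MonoidAlgebra.single (Multiplicative.ofAdd (1 : ZMod (q + 2)))
          (1 : MonoidAlgebra k H)) = Z + 1 := by rw [hZ, sub_add_cancel]
      intro x
      rw [hσZ, add_smul, add_smul, one_smul, one_smul, map_add, hα₀Z]
    set α : M →ₗ[MonoidAlgebra (MonoidAlgebra k H) (Multiplicative (ZMod (q + 2)))]
        (P →₀ MonoidAlgebra (MonoidAlgebra k H) (Multiplicative (ZMod (q + 2)))) :=
      { toFun := α₀, map_add' := α₀.map_add,
        map_smul' := fun z x => by
          simp only [RingHom.id_apply]
          exact aux_bridge (p := q + 2) (N := P →₀ MonoidAlgebra (MonoidAlgebra k H) (Multiplicative (ZMod (q + 2)))) hp α₀ hα₀σ z x } with hα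
    set β : (P →₀ MonoidAlgebra (MonoidAlgebra k H) (Multiplicative (ZMod (q + 2))))
        →ₗ[MonoidAlgebra (MonoidAlgebra k H) (Multiplicative (ZMod (q + 2)))] M :=
      Finsupp.linearCombination (MonoidAlgebra (MonoidAlgebra k H) (Multiplicative (ZMod (q + 2))))
        (fun x : P => φ (Pi.single (0 : Fin (q + 2)) x)) with hβ
    have hβδ : ∀ w : P →₀ MonoidAlgebra k H,
        β (δ w) = φ (Pi.single (0 : Fin (q + 2))
          (Finsupp.linearCombination (MonoidAlgebra k H) id w)) := by
      intro w
      induction w using Finsupp.induction_linear with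
      | zero => simp
      | add f g hf hg =>
        rw [map_add, map_add, hf, hg, map_add, ← map_add φ, ← Pi.single_add]
      | single x c =>
        rw [hδ, Finsupp.linearCombination_single, ← aux_key (p := q + 2) _ c (Finsupp.single x
          (1 : MonoidAlgebra (MonoidAlgebra k H) (Multiplicative (ZMod (q + 2))))), map_smul,
          aux_key, hβ, Finsupp.linearCombination_single, one_smul,
          Finsupp.linearCombination_single, id_eq, Pi.single_smul, map_smul]
    have hpos : ∀ (j : ℕ) (hj : j < q + 2) (c : P),
        Z ^ j • φ (Pi.single (0 : Fin (q + 2)) c) = φ (Pi.single (⟨j, hj⟩ : Fin (q + 2)) c) := by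
      intro j
      induction j with
      | zero =>
        intro hj c
        rw [pow_zero, one_smul]
        congr 1
      | succ j ih =>
        intro hj c
        rw [pow_succ', mul_smul, ih (by omega) c, hsh]
        congr 1
        funext s
        rcases s with ⟨sv, hsv⟩
        simp only [Pi.single_apply, Fin.ext_iff]
        split_ifs <;> first | rfl | omega
    have hβα : ∀ m, β (α m) = m := by
      intro m
      have h1 : α m = ∑ r : Fin (q + 2), Z ^ (r : ℕ) • δ (s0 (e'.symm m r)) := hα₀ m
      rw [h1, map_sum]
      have h2 : ∀ r : Fin (q + 2), β (Z ^ (r : ℕ) • δ (s0 (e'.symm m r)))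
          = φ (Pi.single r (e'.symm m r)) := by
        intro r
        rw [map_smul, hβδ, hs0, hpos (r : ℕ) r.2]
      rw [Finset.sum_congr rfl fun r _ => h2 r, ← map_sum, Finset.univ_sum_single, happ]
    exact Module.Projective.of_split α β (LinearMap.ext hβα)
  · refine ⟨e'.symm, ?_, ?_⟩
    · intro m
      rw [hesZ m]
      simp
    · intro m r hr
      rw [hesZ m]
      simp [hr.ne']

set_option maxHeartbeats 2000000

/-- Let `C_*` be the two-term complex `0 → D_{i+1} → D_i → 0`
(concentrated in degrees `i+1` and `i`), where `∂ = d i` is an isomorphism of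
projective `kH`-modules.  Then for `n > i` the resolution module `M = M(C_*, n)`
is isomorphic as a `kG`-module (`kG = kH ⊗ k[Z]/(Z^p)`) to
`D_i ⊗_k k[Z]/(Z^p)` — i.e. to the free `k[Z]/(Z^p)`-module `D_i^p` with `Z`
acting as the shift — and in particular `M` is a projective `kG`-module. -/
theorem resolution_module_two_term_complex
    (k : Type) [Field k] (p : ℕ) (hp : p.Prime) [CharP k p]
    (H : Type) [Group H] [Finite H]
    (C : ℕ → Type) [∀ j, AddCommGroup (C j)] [∀ j, Module (MonoidAlgebra k H) (C j)]
    (d : ∀ j, C (j + 1) →ₗ[MonoidAlgebra k H] C j)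
    (i : ℕ)
    -- the complex is concentrated in degrees `i` and `i+1`, with `∂ = d i` an
    -- isomorphism of projective modules
    (hconc : ∀ j, j ≠ i → j ≠ i + 1 → Subsingleton (C j))
    (hdzero : ∀ j, j ≠ i → d j = 0)
    (hiso : Function.Bijective (d i))
    (hproj : Module.Projective (MonoidAlgebra k H) (C i))
    (hproj' : Module.Projective (MonoidAlgebra k H) (C (i + 1)))
    (n : ℕ∞) (hn : (i : ℕ∞) < n)
    (M : Type) [AddCommGroup M]
    [Module (MonoidAlgebra (MonoidAlgebra k H) (Multiplicative (ZMod p))) M]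
    [Module (MonoidAlgebra k H) M]
    [IsScalarTower (MonoidAlgebra k H)
      (MonoidAlgebra (MonoidAlgebra k H) (Multiplicative (ZMod p))) M]
    (ιe : (j : ℕ) → ((j : ℕ∞) < n) → (C (2 * j) →ₗ[MonoidAlgebra k H] M))
    (ιo : (j : ℕ) → ((j : ℕ∞) < n) → Fin (p - 1) →
      (C (2 * j + 1) →ₗ[MonoidAlgebra k H] M))
    (hdecomp : Function.Bijective
      (DirectSum.toModule (MonoidAlgebra k H) {j : ℕ // (j : ℕ∞) < n} M
        (fun j => LinearMap.coprod (ιe j.1 j.2)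
          (LinearMap.lsum (MonoidAlgebra k H)
            (fun _ : Fin (p - 1) => C (2 * j.1 + 1)) ℕ (fun t => ιo j.1 j.2 t)))))
    (Z : MonoidAlgebra (MonoidAlgebra k H) (Multiplicative (ZMod p)))
    (hZ : Z = MonoidAlgebra.single (Multiplicative.ofAdd (1 : ZMod p))
      (1 : MonoidAlgebra k H) - 1)
    (hZ0 : ∀ (h : ((0 : ℕ) : ℕ∞) < n) (m : C (2 * 0)), Z • ιe 0 h m = 0)
    (hZe : ∀ (j : ℕ) (hj1 : ((j + 1 : ℕ) : ℕ∞) < n) (hj : ((j : ℕ) : ℕ∞) < n)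
      (m : C (2 * (j + 1))),
      Z • ιe (j + 1) hj1 m = ιo j hj ⟨0, by have := hp.two_le; omega⟩ (d (2 * j + 1) m))
    (hZo : ∀ (j : ℕ) (hj : ((j : ℕ) : ℕ∞) < n) (t : Fin (p - 1))
      (ht : (t : ℕ) + 1 < p - 1) (m : C (2 * j + 1)),
      Z • ιo j hj t m = ιo j hj ⟨(t : ℕ) + 1, ht⟩ m)
    (hZlast : ∀ (j : ℕ) (hj : ((j : ℕ) : ℕ∞) < n) (hl : p - 2 < p - 1)
      (m : C (2 * j + 1)),
      Z • ιo j hj ⟨p - 2, hl⟩ m = ιe j hj (d (2 * j) m)) :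
    Module.Projective (MonoidAlgebra (MonoidAlgebra k H) (Multiplicative (ZMod p))) M ∧
    ∃ e : M ≃ₗ[MonoidAlgebra k H] (Fin p → C i),
      (∀ m : M, e (Z • m) ⟨0, by have := hp.two_le; omega⟩ = 0) ∧
      (∀ (m : M) (r : Fin p) (hr : 0 < (r : ℕ)),
        e (Z • m) r = e m ⟨(r : ℕ) - 1, by have := r.2; omega⟩) := by
  obtain ⟨q, rfl⟩ : ∃ q, p = q + 2 := ⟨p - 2, by have := hp.two_le; omega⟩
  rcases Nat.even_or_odd i with he | ho
  · -- EVEN CASE : i = 2 * j0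
    obtain ⟨j0, hj0⟩ := he
    have h2 : 2 * j0 = i := by omega
    subst h2
    clear hj0
    have h0 : ((j0 : ℕ) : ℕ∞) < n := lt_of_le_of_lt (Nat.cast_le.mpr (by omega)) hn
    have hZe0 : ∀ (x : C (2 * j0)), Z • ιe j0 h0 x = 0 := by
      cases j0 with
      | zero => intro x; exact hZ0 h0 x
      | succ j' =>
        intro x
        have hj' : ((j' : ℕ) : ℕ∞) < n :=
          lt_of_le_of_lt (Nat.cast_le.mpr (by omega)) h0
        rw [hZe j' h0 hj' x, hdzero (2 * j' + 1) (by omega), LinearMap.zero_apply, map_zero]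
    set E : C (2 * j0 + 1) ≃ₗ[MonoidAlgebra k H] C (2 * j0) :=
      LinearEquiv.ofBijective (d (2 * j0)) hiso with hE
    have hdE : ∀ z, d (2 * j0) (E.symm z) = z := fun z => E.apply_symm_apply z
    set Φ := DirectSum.toModule (MonoidAlgebra k H) {j : ℕ // (j : ℕ∞) < n} M
        (fun j => LinearMap.coprod (ιe j.1 j.2)
          (LinearMap.lsum (MonoidAlgebra k H)
            (fun _ : Fin (q + 2 - 1) => C (2 * j.1 + 1)) ℕ (fun t => ιo j.1 j.2 t))) with hΦ
    set pair : (Fin (q + 2) → C (2 * j0)) →ₗ[MonoidAlgebra k H]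
        (C (2 * j0) × (Fin (q + 2 - 1) → C (2 * j0 + 1))) :=
      LinearMap.prod (LinearMap.proj ⟨q + 1, by omega⟩)
        (LinearMap.pi fun t : Fin (q + 2 - 1) =>
          (E.symm : C (2 * j0) →ₗ[MonoidAlgebra k H] C (2 * j0 + 1)).comp
            (LinearMap.proj ⟨t.1, lt_of_lt_of_le t.2 (Nat.sub_le _ _)⟩)) with hpair
    set φ : (Fin (q + 2) → C (2 * j0)) →ₗ[MonoidAlgebra k H] M :=
      Φ.comp ((DirectSum.lof (MonoidAlgebra k H) {j : ℕ // (j : ℕ∞) < n}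
        (fun j => C (2 * j.1) × (Fin (q + 2 - 1) → C (2 * j.1 + 1))) ⟨j0, h0⟩).comp pair)
      with hφdef
    have hφ : ∀ f, φ f = ιe j0 h0 (f ⟨q + 1, by omega⟩)
        + ∑ t : Fin (q + 2 - 1), ιo j0 h0 t
            (E.symm (f ⟨t.1, lt_of_lt_of_le t.2 (Nat.sub_le _ _)⟩)) := by
      intro f
      rw [hφdef]
      simp only [hΦ, LinearMap.comp_apply, DirectSum.toModule_lof, LinearMap.coprod_apply,
        hpair, LinearMap.prod_apply, Pi.prod, Function.prod_apply, LinearMap.lsum_apply, LinearMap.sum_apply,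
        LinearMap.comp_apply, LinearMap.proj_apply, LinearMap.pi_apply, LinearEquiv.coe_coe]
    -- specialized sum lemmas (defeq: q + 2 - 1 = q + 1)
    have sum_succ : ∀ {β : Type} [AddCommMonoid β] (G : Fin (q + 2 - 1) → β),
        ∑ t, G t = G ⟨0, by omega⟩ + ∑ t : Fin q, G ⟨t.1 + 1, by have := t.2; omega⟩ :=
      fun G => Fin.sum_univ_succ (n := q) G
    have sum_castSucc : ∀ {β : Type} [AddCommMonoid β] (G : Fin (q + 2 - 1) → β),
        ∑ t, G t = (∑ t : Fin q, G ⟨t.1, by have := t.2; omega⟩) + G ⟨q, by omega⟩ :=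
      fun G => Fin.sum_univ_castSucc (n := q) G
    -- injectivity
    have hinj : Function.Injective φ := by
      intro f g hfg
      have h1 : (DirectSum.lof (MonoidAlgebra k H) {j : ℕ // (j : ℕ∞) < n}
          (fun j => C (2 * j.1) × (Fin (q + 2 - 1) → C (2 * j.1 + 1))) ⟨j0, h0⟩) (pair f)
          = (DirectSum.lof (MonoidAlgebra k H) {j : ℕ // (j : ℕ∞) < n}
          (fun j => C (2 * j.1) × (Fin (q + 2 - 1) → C (2 * j.1 + 1))) ⟨j0, h0⟩) (pair g) :=
        hdecomp.1 hfg
      have h2 : pair f = pair g := by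
        have h3 := congrArg (fun x => x ⟨j0, h0⟩) h1
        simpa only [DirectSum.lof_apply] using h3
      funext r
      rcases r with ⟨rv, hrv⟩
      by_cases hr : rv = q + 1
      · subst hr
        exact congrArg Prod.fst h2
      · have h3 := congrArg (fun x => x.2 (⟨rv, by omega⟩ : Fin (q + 2 - 1))) h2
        exact E.symm.injective h3
    -- surjectivity: generators in range
    have hre : ∀ (j : ℕ) (hj : ((j : ℕ) : ℕ∞) < n) (c : C (2 * j)),
        ιe j hj c ∈ LinearMap.range φ := by
      intro j hj c
      by_cases hjj : j0 = j
      · subst hjj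
        refine ⟨Pi.single ⟨q + 1, by omega⟩ c, ?_⟩
        rw [hφ]
        have hsum : ∑ t : Fin (q + 2 - 1), ιo j0 h0 t
            (E.symm ((Pi.single (M := fun _ : Fin (q + 2) => C (2 * j0))
                (⟨q + 1, by omega⟩ : Fin (q + 2)) c)
              ⟨t.1, lt_of_lt_of_le t.2 (Nat.sub_le _ _)⟩)) = 0 := by
          refine Finset.sum_eq_zero fun t _ => ?_
          rw [Pi.single_eq_of_ne (show (⟨t.1, lt_of_lt_of_le t.2 (Nat.sub_le _ _)⟩ : Fin (q + 2))
            ≠ ⟨q + 1, by omega⟩ from Fin.ne_of_val_ne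
            (show t.1 ≠ q + 1 by have := t.2; omega)), map_zero, map_zero]
        rw [hsum, add_zero, Pi.single_eq_same]
      · haveI := hconc (2 * j) (by omega) (by omega)
        have hc : c = 0 := Subsingleton.elim c 0
        rw [hc, map_zero]
        exact zero_mem _
    have hro : ∀ (j : ℕ) (hj : ((j : ℕ) : ℕ∞) < n) (t : Fin (q + 2 - 1))
        (m : C (2 * j + 1)), ιo j hj t m ∈ LinearMap.range φ := by
      intro j hj t m
      by_cases hjj : j0 = j
      · subst hjj
        refine ⟨Pi.single ⟨t.1, by have := t.2; omega⟩ (E m), ?_⟩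
        rw [hφ]
        have h1 : (Pi.single (M := fun _ : Fin (q + 2) => C (2 * j0))
            (⟨t.1, by have := t.2; omega⟩ : Fin (q + 2)) (E m))
            ⟨q + 1, by omega⟩ = 0 :=
          Pi.single_eq_of_ne (show (⟨q + 1, by omega⟩ : Fin (q + 2))
            ≠ ⟨t.1, by have := t.2; omega⟩ from Fin.ne_of_val_ne
            (show q + 1 ≠ t.1 by have := t.2; omega)) _
        rw [h1, map_zero, zero_add]
        have hsum : ∑ s : Fin (q + 2 - 1), ιo j0 h0 s
            (E.symm ((Pi.single (M := fun _ : Fin (q + 2) => C (2 * j0))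
                (⟨t.1, by have := t.2; omega⟩ : Fin (q + 2)) (E m))
              ⟨s.1, lt_of_lt_of_le s.2 (Nat.sub_le _ _)⟩)) = ιo j0 h0 t m := by
          rw [Finset.sum_eq_single_of_mem t (Finset.mem_univ t) ?_]
          · rw [Pi.single_eq_same, LinearEquiv.symm_apply_apply]
          · intro s _ hst
            rw [Pi.single_eq_of_ne (show (⟨s.1, lt_of_lt_of_le s.2 (Nat.sub_le _ _)⟩ : Fin (q + 2))
              ≠ ⟨t.1, by have := t.2; omega⟩ from Fin.ne_of_val_ne
              (show s.1 ≠ t.1 from fun hh => hst (Fin.ext hh))), map_zero, map_zero]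
        rw [hsum]
      · haveI := hconc (2 * j + 1) (by omega) (by omega)
        have hm : m = 0 := Subsingleton.elim m 0
        rw [hm, map_zero]
        exact zero_mem _
    have hsurj : Function.Surjective φ := by
      have hall : ∀ y, Φ y ∈ LinearMap.range φ := by
        intro y
        induction y using DirectSum.induction_on with
        | zero => rw [map_zero]; exact zero_mem _
        | of j v =>
          rw [hΦ, ← DirectSum.lof_eq_of (MonoidAlgebra k H), DirectSum.toModule_lof,
            LinearMap.coprod_apply]
          refine add_mem (hre j.1 j.2 v.1) ?_
          rw [LinearMap.lsum_apply, LinearMap.sum_apply]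
          refine Submodule.sum_mem _ fun t _ => ?_
          exact hro j.1 j.2 t _
        | add a b ha hb => rw [map_add]; exact add_mem ha hb
      intro x
      obtain ⟨y, rfl⟩ := hdecomp.2 x
      exact hall y
    -- the shift property
    have hZφ : ∀ f : Fin (q + 2) → C (2 * j0), Z • φ f
        = φ (fun r => if (r : ℕ) = 0 then 0
            else f ⟨(r : ℕ) - 1, lt_of_le_of_lt (Nat.sub_le _ _) r.2⟩) := by
      intro f
      have hLHS : Z • φ f = ιe j0 h0 (f ⟨q, by omega⟩)
          + ∑ t : Fin q, ιo j0 h0 ⟨t.1 + 1, by have := t.2; omega⟩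
              (E.symm (f ⟨t.1, by have := t.2; omega⟩)) := by
        rw [hφ f, smul_add, Finset.smul_sum, hZe0, zero_add]
        have hterm : ∀ t : Fin (q + 2 - 1),
            Z • ιo j0 h0 t (E.symm (f ⟨t.1, lt_of_lt_of_le t.2 (Nat.sub_le _ _)⟩))
            = if h : t.1 + 1 < q + 2 - 1
              then ιo j0 h0 ⟨t.1 + 1, h⟩
                (E.symm (f ⟨t.1, lt_of_lt_of_le t.2 (Nat.sub_le _ _)⟩))
              else ιe j0 h0 (f ⟨t.1, lt_of_lt_of_le t.2 (Nat.sub_le _ _)⟩) := by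
          intro t
          by_cases h : t.1 + 1 < q + 2 - 1
          · rw [dif_pos h, hZo j0 h0 t h]
          · rw [dif_neg h]
            have ht : t = ⟨q + 2 - 2, by omega⟩ := Fin.ext (by have := t.2; simp; omega)
            rw [ht, hZlast j0 h0 (by omega)]
            congr 1
            exact hdE _
        rw [Finset.sum_congr rfl fun t _ => hterm t, sum_castSucc]
        refine Eq.trans (add_comm _ _) (congrArg₂ (· + ·) ?_ ?_)
        · rw [dif_neg (show ¬((q : ℕ) + 1 < q + 2 - 1) by omega)]
        · refine Finset.sum_congr rfl fun t _ => ?_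
          rw [dif_pos (show (t : ℕ) + 1 < q + 2 - 1 by have := t.2; omega)]
      have hRHS : φ (fun r : Fin (q + 2) => if (r : ℕ) = 0 then 0
            else f ⟨(r : ℕ) - 1, lt_of_le_of_lt (Nat.sub_le _ _) r.2⟩)
          = ιe j0 h0 (f ⟨q, by omega⟩)
          + ∑ t : Fin q, ιo j0 h0 ⟨t.1 + 1, by have := t.2; omega⟩
              (E.symm (f ⟨t.1, by have := t.2; omega⟩)) := by
        rw [hφ]
        refine congrArg₂ (· + ·) rfl ?_
        rw [sum_succ]
        refine Eq.trans (congrArg₂ (· + ·) ?_ ?_) (zero_add _)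
        · show ιo j0 h0 ⟨0, by omega⟩ (E.symm 0) = 0
          rw [map_zero, map_zero]
        · refine Finset.sum_congr rfl fun t _ => ?_
          exact rfl
      rw [hLHS, hRHS]
    exact aux_main k (q + 2) hp H (C (2 * j0)) hproj M Z hZ φ ⟨hinj, hsurj⟩ hZφ
  · -- ODD CASE : i = 2 * j0 + 1
    obtain ⟨j0, hj0⟩ := ho
    have h2 : 2 * j0 + 1 = i := hj0.symm
    subst h2
    clear hj0
    have h0 : ((j0 : ℕ) : ℕ∞) < n := lt_of_le_of_lt (Nat.cast_le.mpr (by omega)) hn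
    have h1n : (((j0 + 1 : ℕ)) : ℕ∞) < n := lt_of_le_of_lt (Nat.cast_le.mpr (by omega)) hn
    set E : C (2 * j0 + 1 + 1) ≃ₗ[MonoidAlgebra k H] C (2 * j0 + 1) :=
      LinearEquiv.ofBijective (d (2 * j0 + 1)) hiso with hE
    have hdE : ∀ z, d (2 * j0 + 1) (E.symm z) = z := fun z => E.apply_symm_apply z
    set Φ := DirectSum.toModule (MonoidAlgebra k H) {j : ℕ // (j : ℕ∞) < n} M
        (fun j => LinearMap.coprod (ιe j.1 j.2)
          (LinearMap.lsum (MonoidAlgebra k H)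
            (fun _ : Fin (q + 2 - 1) => C (2 * j.1 + 1)) ℕ (fun t => ιo j.1 j.2 t))) with hΦ
    set pairA : (Fin (q + 2) → C (2 * j0 + 1)) →ₗ[MonoidAlgebra k H]
        (C (2 * j0) × (Fin (q + 2 - 1) → C (2 * j0 + 1))) :=
      LinearMap.prod 0 (LinearMap.pi fun t : Fin (q + 2 - 1) =>
        LinearMap.proj ⟨t.1 + 1, by have := t.2; omega⟩) with hpairA
    set pairB : (Fin (q + 2) → C (2 * j0 + 1)) →ₗ[MonoidAlgebra k H]
        (C (2 * (j0 + 1)) × (Fin (q + 2 - 1) → C (2 * (j0 + 1) + 1))) :=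
      LinearMap.prod ((E.symm : C (2 * j0 + 1) →ₗ[MonoidAlgebra k H]
        C (2 * j0 + 1 + 1)).comp (LinearMap.proj ⟨0, by omega⟩)) 0 with hpairB
    set φ : (Fin (q + 2) → C (2 * j0 + 1)) →ₗ[MonoidAlgebra k H] M :=
      Φ.comp (((DirectSum.lof (MonoidAlgebra k H) {j : ℕ // (j : ℕ∞) < n}
        (fun j => C (2 * j.1) × (Fin (q + 2 - 1) → C (2 * j.1 + 1))) ⟨j0, h0⟩).comp pairA)
        + ((DirectSum.lof (MonoidAlgebra k H) {j : ℕ // (j : ℕ∞) < n}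
        (fun j => C (2 * j.1) × (Fin (q + 2 - 1) → C (2 * j.1 + 1))) ⟨j0 + 1, h1n⟩).comp pairB))
      with hφdef
    have hφ : ∀ f, φ f
        = (∑ t : Fin (q + 2 - 1), ιo j0 h0 t (f ⟨t.1 + 1, by have := t.2; omega⟩))
          + ιe (j0 + 1) h1n (E.symm (f ⟨0, by omega⟩)) := by
      intro f
      rw [hφdef]
      simp only [hΦ, LinearMap.comp_apply, LinearMap.add_apply, map_add,
        DirectSum.toModule_lof, LinearMap.coprod_apply, hpairA, hpairB,
        LinearMap.prod_apply, Pi.prod, Function.prod_apply, LinearMap.zero_apply, map_zero,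
        LinearMap.lsum_apply, LinearMap.sum_apply, LinearMap.comp_apply,
        LinearMap.proj_apply, LinearMap.pi_apply, LinearEquiv.coe_coe,
        Finset.sum_const_zero, zero_add, add_zero]
    have hne : (⟨j0 + 1, h1n⟩ : {j : ℕ // (j : ℕ∞) < n}) ≠ ⟨j0, h0⟩ := by
      intro hh
      rw [Subtype.mk.injEq] at hh
      omega
    have hne' : (⟨j0, h0⟩ : {j : ℕ // (j : ℕ∞) < n}) ≠ ⟨j0 + 1, h1n⟩ := by
      intro hh
      rw [Subtype.mk.injEq] at hh
      omega
    -- specialized sum lemmas (defeq: q + 2 - 1 = q + 1)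
    have sum_succ : ∀ {β : Type} [AddCommMonoid β] (G : Fin (q + 2 - 1) → β),
        ∑ t, G t = G ⟨0, by omega⟩ + ∑ t : Fin q, G ⟨t.1 + 1, by have := t.2; omega⟩ :=
      fun G => Fin.sum_univ_succ (n := q) G
    have sum_castSucc : ∀ {β : Type} [AddCommMonoid β] (G : Fin (q + 2 - 1) → β),
        ∑ t, G t = (∑ t : Fin q, G ⟨t.1, by have := t.2; omega⟩) + G ⟨q, by omega⟩ :=
      fun G => Fin.sum_univ_castSucc (n := q) G
    -- injectivity
    have hinj : Function.Injective φ := by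
      intro f g hfg
      have h1 : ((DirectSum.lof (MonoidAlgebra k H) {j : ℕ // (j : ℕ∞) < n}
            (fun j => C (2 * j.1) × (Fin (q + 2 - 1) → C (2 * j.1 + 1))) ⟨j0, h0⟩) (pairA f)
          + (DirectSum.lof (MonoidAlgebra k H) {j : ℕ // (j : ℕ∞) < n}
            (fun j => C (2 * j.1) × (Fin (q + 2 - 1) → C (2 * j.1 + 1))) ⟨j0 + 1, h1n⟩) (pairB f))
          = ((DirectSum.lof (MonoidAlgebra k H) {j : ℕ // (j : ℕ∞) < n}
            (fun j => C (2 * j.1) × (Fin (q + 2 - 1) → C (2 * j.1 + 1))) ⟨j0, h0⟩) (pairA g)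
          + (DirectSum.lof (MonoidAlgebra k H) {j : ℕ // (j : ℕ∞) < n}
            (fun j => C (2 * j.1) × (Fin (q + 2 - 1) → C (2 * j.1 + 1))) ⟨j0 + 1, h1n⟩) (pairB g)) :=
        hdecomp.1 hfg
      have hAeq : pairA f = pairA g := by
        have h3 := congrArg (fun x => x ⟨j0, h0⟩) h1
        simpa only [DirectSum.add_apply, DirectSum.lof_eq_of, DirectSum.of_eq_same,
          DirectSum.of_eq_of_ne _ _ _ hne', add_zero] using h3
      have hBeq : pairB f = pairB g := by
        have h3 := congrArg (fun x => x ⟨j0 + 1, h1n⟩) h1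
        simpa only [DirectSum.add_apply, DirectSum.lof_eq_of, DirectSum.of_eq_same,
          DirectSum.of_eq_of_ne _ _ _ hne, zero_add] using h3
      funext r
      rcases r with ⟨rv, hrv⟩
      match rv, hrv with
      | 0, hrv =>
        have h4 := congrArg Prod.fst hBeq
        exact E.symm.injective h4
      | (rv' + 1), hrv =>
        have h4 := congrArg (fun x => x.2 (⟨rv', by omega⟩ : Fin (q + 2 - 1))) hAeq
        exact h4
    -- generators in range
    have hre : ∀ (j : ℕ) (hj : ((j : ℕ) : ℕ∞) < n) (c : C (2 * j)),
        ιe j hj c ∈ LinearMap.range φ := by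
      intro j hj c
      by_cases hjj : j0 + 1 = j
      · subst hjj
        refine ⟨Pi.single (M := fun _ : Fin (q + 2) => C (2 * j0 + 1)) ⟨0, by omega⟩ (E c), ?_⟩
        rw [hφ]
        have hsum : ∑ t : Fin (q + 2 - 1), ιo j0 h0 t
            ((Pi.single (M := fun _ : Fin (q + 2) => C (2 * j0 + 1))
              (⟨0, by omega⟩ : Fin (q + 2)) (E c))
              ⟨t.1 + 1, by have := t.2; omega⟩) = 0 := by
          refine Finset.sum_eq_zero fun t _ => ?_
          rw [Pi.single_eq_of_ne (show (⟨t.1 + 1, by have := t.2; omega⟩ : Fin (q + 2))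
            ≠ ⟨0, by omega⟩ from Fin.ne_of_val_ne (Nat.succ_ne_zero _)), map_zero]
        rw [hsum, zero_add, Pi.single_eq_same, LinearEquiv.symm_apply_apply]
      · haveI := hconc (2 * j) (by omega) (by omega)
        have hc : c = 0 := Subsingleton.elim c 0
        rw [hc, map_zero]
        exact zero_mem _
    have hro : ∀ (j : ℕ) (hj : ((j : ℕ) : ℕ∞) < n) (t : Fin (q + 2 - 1))
        (m : C (2 * j + 1)), ιo j hj t m ∈ LinearMap.range φ := by
      intro j hj t m
      by_cases hjj : j0 = j
      · subst hjj
        refine ⟨Pi.single (M := fun _ : Fin (q + 2) => C (2 * j0 + 1))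
          ⟨t.1 + 1, by have := t.2; omega⟩ m, ?_⟩
        rw [hφ]
        have h1 : (Pi.single (M := fun _ : Fin (q + 2) => C (2 * j0 + 1))
            (⟨t.1 + 1, by have := t.2; omega⟩ : Fin (q + 2)) m)
            ⟨0, by omega⟩ = 0 :=
          Pi.single_eq_of_ne (show (⟨0, by omega⟩ : Fin (q + 2))
            ≠ ⟨t.1 + 1, by have := t.2; omega⟩ from Fin.ne_of_val_ne
            (Ne.symm (Nat.succ_ne_zero _))) _
        rw [h1, map_zero, map_zero, add_zero]
        have hsum : ∑ s : Fin (q + 2 - 1), ιo j0 h0 s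
            ((Pi.single (M := fun _ : Fin (q + 2) => C (2 * j0 + 1))
              (⟨t.1 + 1, by have := t.2; omega⟩ : Fin (q + 2)) m)
              ⟨s.1 + 1, by have := s.2; omega⟩) = ιo j0 h0 t m := by
          rw [Finset.sum_eq_single_of_mem t (Finset.mem_univ t) ?_]
          · rw [Pi.single_eq_same]
          · intro s _ hst
            rw [Pi.single_eq_of_ne (show (⟨s.1 + 1, by have := s.2; omega⟩ : Fin (q + 2))
              ≠ ⟨t.1 + 1, by have := t.2; omega⟩ from Fin.ne_of_val_ne
              (show s.1 + 1 ≠ t.1 + 1 from fun hh =>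
                hst (Fin.ext (Nat.succ_injective hh)))), map_zero]
        rw [hsum]
      · haveI := hconc (2 * j + 1) (by omega) (by omega)
        have hm : m = 0 := Subsingleton.elim m 0
        rw [hm, map_zero]
        exact zero_mem _
    have hsurj : Function.Surjective φ := by
      have hall : ∀ y, Φ y ∈ LinearMap.range φ := by
        intro y
        induction y using DirectSum.induction_on with
        | zero => rw [map_zero]; exact zero_mem _
        | of j v =>
          rw [hΦ, ← DirectSum.lof_eq_of (MonoidAlgebra k H), DirectSum.toModule_lof,
            LinearMap.coprod_apply]
          refine add_mem (hre j.1 j.2 v.1) ?_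
          rw [LinearMap.lsum_apply, LinearMap.sum_apply]
          refine Submodule.sum_mem _ fun t _ => ?_
          exact hro j.1 j.2 t _
        | add a b ha hb => rw [map_add]; exact add_mem ha hb
      intro x
      obtain ⟨y, rfl⟩ := hdecomp.2 x
      exact hall y
    -- the shift property
    have hZφ : ∀ f : Fin (q + 2) → C (2 * j0 + 1), Z • φ f
        = φ (fun r => if (r : ℕ) = 0 then 0
            else f ⟨(r : ℕ) - 1, lt_of_le_of_lt (Nat.sub_le _ _) r.2⟩) := by
      intro f
      have hLHS : Z • φ f
          = ∑ t : Fin (q + 2 - 1), ιo j0 h0 t (f ⟨t.1, by have := t.2; omega⟩) := by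
        rw [hφ f, smul_add, Finset.smul_sum]
        rw [hZe j0 h1n h0, hdE]
        have hterm : ∀ t : Fin (q + 2 - 1),
            Z • ιo j0 h0 t (f ⟨t.1 + 1, by have := t.2; omega⟩)
            = if h : t.1 + 1 < q + 2 - 1
              then ιo j0 h0 ⟨t.1 + 1, h⟩ (f ⟨t.1 + 1, by have := t.2; omega⟩)
              else 0 := by
          intro t
          by_cases h : t.1 + 1 < q + 2 - 1
          · rw [dif_pos h, hZo j0 h0 t h]
          · rw [dif_neg h]
            have ht : t = ⟨q + 2 - 2, by omega⟩ := Fin.ext (by have := t.2; simp; omega)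
            rw [ht, hZlast j0 h0 (by omega), hdzero (2 * j0) (by omega),
              LinearMap.zero_apply, map_zero]
        rw [Finset.sum_congr rfl fun t _ => hterm t, sum_castSucc,
          dif_neg (show ¬((q : ℕ) + 1 < q + 2 - 1) by omega), add_zero,
          Finset.sum_congr rfl fun (t : Fin q) _ =>
            dif_pos (show (t : ℕ) + 1 < q + 2 - 1 by have := t.2; omega)]
        rw [sum_succ]
        exact add_comm _ _
      have hRHS : φ (fun r : Fin (q + 2) => if (r : ℕ) = 0 then 0
            else f ⟨(r : ℕ) - 1, lt_of_le_of_lt (Nat.sub_le _ _) r.2⟩)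
          = ∑ t : Fin (q + 2 - 1), ιo j0 h0 t (f ⟨t.1, by have := t.2; omega⟩) := by
        rw [hφ]
        refine Eq.trans (congrArg₂ (· + ·) ?_ ?_) (add_zero _)
        · exact Finset.sum_congr rfl fun t _ => rfl
        · show ιe (j0 + 1) h1n (E.symm 0) = 0
          rw [map_zero, map_zero]
      rw [hLHS, hRHS]
    exact aux_main k (q + 2) hp H (C (2 * j0 + 1)) hproj M Z hZ φ ⟨hinj, hsurj⟩ hZφ
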